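/- Let s ≥ 1 and t ≥ 1 be natural numbers and θ' = t·(2s−1). Then the sumset {i + t·j : 0 ≤ i ≤ t−1, 0 ≤ j ≤ s−1} + {t·q + θ'·l : 0 ≤ q ≤ s−1, 0 ≤ l ≤ t−1} equals the interval {0, 1, …, t·θ' − 1} of natural numbers. -/
import Mathlib


open Pointwise

/-- For s, t ≥ 1 and θ' = t·(2s−1), the sumset
P_CA + P_CB of the PolyDot coded supports equals {0, 1, …, t·θ' − 1}. -/
theorem polydot_coded_sumset (s t : ℕ) (hs : 1 ≤ s) (ht : 1 ≤ t) :
    ({n : ℕ | ∃ i j, i < t ∧ j < s ∧ n = i + t * j} +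
     {n : ℕ | ∃ q l, q < s ∧ l < t ∧ n = t * q + (t * (2 * s - 1)) * l})
      = {n : ℕ | n < t * (t * (2 * s - 1))} := by
  obtain ⟨u, hu⟩ : ∃ u, 2 * s - 1 = u := ⟨_, rfl⟩
  have hu1 : 2 * s = u + 1 := by omega
  ext n
  simp only [Set.mem_add, Set.mem_setOf_eq, hu]
  constructor
  · rintro ⟨a, ⟨i, j, hi, hj, rfl⟩, b, ⟨q, l, hq, hl, rfl⟩, rfl⟩
    have hjq : j + q + 1 ≤ u := by omega
    nlinarith [Nat.mul_le_mul_left t hjq, Nat.mul_le_mul_left (t * u) (show l + 1 ≤ t by omega)]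
  · intro hn
    have hθpos : 0 < t * u := Nat.mul_pos ht (by omega)
    have htpos : 0 < t := ht
    set l := n / (t * u) with hldef
    set rem := n % (t * u) with hremdef
    have hl : l < t := by
      rw [hldef, Nat.div_lt_iff_lt_mul hθpos]
      linarith [hn, (by ring : t * (t * u) = t * u * t)]
    have hrem : rem < t * u := Nat.mod_lt _ hθpos
    set i := rem % t with hidef
    set r := rem / t with hrdef
    have hit : i < t := Nat.mod_lt _ htpos
    have hr : r < u := by
      rw [hrdef, Nat.div_lt_iff_lt_mul htpos]
      linarith [hrem, (by ring : t * u = u * t)]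
    refine ⟨i + t * (min r (s - 1)), ⟨i, min r (s - 1), hit, by omega, rfl⟩,
            t * (r - min r (s - 1)) + (t * u) * l,
            ⟨r - min r (s - 1), l, by omega, hl, rfl⟩, ?_⟩
    have h1 : t * u * l + rem = n := Nat.div_add_mod n (t * u)
    have h2 : t * r + i = rem := Nat.div_add_mod rem t
    have h3 : t * (min r (s - 1)) + t * (r - min r (s - 1)) = t * r := by
      rw [← Nat.mul_add]; congr 1; omega
    omega
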